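/- For an odd prime r and coprime integers a, b, one has H(a - b) = a^r - b^r, where H(x) = \sum_{k=0}^{(r-1)/2} c_k (ab)^k x^{r-2k} with c_k = (r/(r-k))·C(r-k, k). -/

import Mathlib

open Finset

/-- The coefficient `c_k = (n/(n-k))·C(n-k,k)` as a rational number. -/
def ccH (n k : ℕ) : ℚ := (n : ℚ) / ((n : ℚ) - (k : ℚ)) * ((n - k).choose k : ℚ)

lemma ccH_eq_zero {n k : ℕ} (hk : 1 ≤ k) (h : n < 2 * k) : ccH n k = 0 := by
  have : n - k < k := by omega
  rw [ccH, Nat.choose_eq_zero_of_lt this]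
  simp

lemma ccH_rec (n k : ℕ) (hn : 1 ≤ n) (hk : 1 ≤ k) (h2 : 2 * k ≤ n + 2) :
    ccH (n + 2) k = ccH (n + 1) k + ccH n (k - 1) := by
  obtain ⟨j, rfl⟩ : ∃ j, k = j + 1 := ⟨k - 1, by omega⟩
  have hjn : 2 * j ≤ n := by omega
  have e1 : n + 2 - (j + 1) = (n - j) + 1 := by omega
  have e2 : n + 1 - (j + 1) = n - j := by omega
  have e3 : (j + 1) - 1 = j := by omega
  set m := n - j with hm
  have hjm : j ≤ m := by omega
  have hm1 : 1 ≤ m := by omega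
  have hnm : (n : ℚ) = (m : ℚ) + (j : ℚ) := by
    have : n = m + j := by omega
    exact_mod_cast congrArg (Nat.cast : ℕ → ℚ) this
  have key : ((m.choose (j + 1)) : ℚ) * ((j : ℚ) + 1) =
      ((m.choose j) : ℚ) * ((m : ℚ) - (j : ℚ)) := by
    have h := Nat.choose_succ_right_eq m j
    have := congrArg (Nat.cast : ℕ → ℚ) h
    push_cast [Nat.cast_sub hjm] at this
    convert this using 2
  rw [ccH, ccH, ccH, e1, e2, e3, Nat.choose_succ_succ]
  have d1 : ((n : ℚ) + 2) - ((j : ℚ) + 1) = (m : ℚ) + 1 := by rw [hnm]; ring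
  have d2 : ((n : ℚ) + 1) - ((j : ℚ) + 1) = (m : ℚ) := by rw [hnm]; ring
  have d3 : (n : ℚ) - (j : ℚ) = (m : ℚ) := by rw [hnm]; ring
  have hm0 : (m : ℚ) ≠ 0 := by exact_mod_cast Nat.one_le_iff_ne_zero.mp hm1
  have hm10 : (m : ℚ) + 1 ≠ 0 := by positivity
  push_cast
  rw [d1, d2, d3, hnm]
  field_simp
  linear_combination -key

lemma ccH_rec' (n k : ℕ) (hn : 1 ≤ n) :
    ccH (n + 2) (k + 1) = ccH (n + 1) (k + 1) + ccH n k := by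
  rcases le_or_gt (2 * (k + 1)) (n + 2) with h | h
  · have := ccH_rec n (k + 1) hn (by omega) h
    simpa using this
  · rw [ccH_eq_zero (by omega) (by omega), ccH_eq_zero (by omega) (by omega),
      ccH_eq_zero (by omega) (by omega)]
    ring

/-- `H`-sum extended over a possibly larger range. -/
def SeH (q d : ℚ) (n N : ℕ) : ℚ := ∑ k ∈ Finset.range N, ccH n k * q ^ k * d ^ (n - 2 * k)

lemma SeH_eq (q d : ℚ) (n N : ℕ) (h : n / 2 + 1 ≤ N) :
    SeH q d n N = SeH q d n (n / 2 + 1) := by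
  rw [SeH, SeH]
  refine (Finset.sum_subset (Finset.range_subset_range.mpr h) ?_).symm
  intro k _ hk
  rw [Finset.mem_range, not_lt] at hk
  rw [ccH_eq_zero (by omega) (by omega)]
  ring

lemma SeH_rec (q d : ℚ) (n : ℕ) (hn : 1 ≤ n) :
    SeH q d (n + 2) (n + 3) = d * SeH q d (n + 1) (n + 3) + q * SeH q d n (n + 2) := by
  rw [SeH, SeH, SeH, Finset.sum_range_succ' _ (n + 2), Finset.sum_range_succ' _ (n + 2),
    Finset.mul_sum, mul_add, Finset.mul_sum]
  have ccH_zero : ∀ m : ℕ, 1 ≤ m → ccH m 0 = 1 := by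
    intro m hm
    have hm0 : (m : ℚ) ≠ 0 := by exact_mod_cast Nat.one_le_iff_ne_zero.mp hm
    simp [ccH, hm0]
  have hconst : ccH (n + 2) 0 * q ^ 0 * d ^ (n + 2 - 2 * 0) =
      d * (ccH (n + 1) 0 * q ^ 0 * d ^ (n + 1 - 2 * 0)) := by
    rw [ccH_zero _ (by omega), ccH_zero _ (by omega)]
    simp only [pow_zero, one_mul, mul_one, Nat.mul_zero, Nat.sub_zero]
    rw [pow_succ]
    ring
  rw [hconst]
  have hsum : ∀ k ∈ Finset.range (n + 2),
      ccH (n + 2) (k + 1) * q ^ (k + 1) * d ^ (n + 2 - 2 * (k + 1)) =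
        d * (ccH (n + 1) (k + 1) * q ^ (k + 1) * d ^ (n + 1 - 2 * (k + 1))) +
          q * (ccH n k * q ^ k * d ^ (n - 2 * k)) := by
    intro k _
    have e1 : n + 2 - 2 * (k + 1) = n - 2 * k := by omega
    rw [e1, ccH_rec' n k hn]
    have hd : d * (ccH (n + 1) (k + 1) * q ^ (k + 1) * d ^ (n + 1 - 2 * (k + 1))) =
        ccH (n + 1) (k + 1) * q ^ (k + 1) * d ^ (n - 2 * k) := by
      rcases le_or_gt (2 * (k + 1)) (n + 1) with h | h
      · rw [show n - 2 * k = (n + 1 - 2 * (k + 1)) + 1 by omega, pow_succ]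
        ring
      · rw [ccH_eq_zero (by omega) (by omega)]
        ring
    rw [hd]
    ring
  rw [Finset.sum_congr rfl hsum, Finset.sum_add_distrib]
  ring

/-- The `H`-sum. -/
def SH (q d : ℚ) (n : ℕ) : ℚ := SeH q d n (n / 2 + 1)

lemma SH_rec (q d : ℚ) (n : ℕ) (hn : 1 ≤ n) :
    SH q d (n + 2) = d * SH q d (n + 1) + q * SH q d n := by
  rw [SH, SH, SH, ← SeH_eq q d (n + 2) (n + 3) (by omega),
    ← SeH_eq q d (n + 1) (n + 3) (by omega), ← SeH_eq q d n (n + 2) (by omega)]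
  exact SeH_rec q d n hn

lemma SH_one (q d : ℚ) : SH q d 1 = d := by
  simp [SH, SeH, ccH]

lemma SH_two (q d : ℚ) : SH q d 2 = d ^ 2 + 2 * q := by
  rw [SH, SeH]
  rw [show (2 : ℕ) / 2 + 1 = 2 from rfl, Finset.sum_range_succ, Finset.sum_range_succ,
    Finset.sum_range_zero]
  norm_num [ccH]

lemma SH_eval (x y : ℚ) : ∀ n, 1 ≤ n → SH (-(x * y)) (x + y) n = x ^ n + y ^ n
  | 0, h => by omega
  | 1, _ => by rw [SH_one]; ring
  | 2, _ => by rw [SH_two]; ring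
  | (m + 3), _ => by
    rw [show m + 3 = (m + 1) + 2 from rfl, SH_rec _ _ _ (by omega),
      SH_eval x y (m + 2) (by omega), SH_eval x y (m + 1) (by omega)]
    ring

/-- For an odd prime `r` and coprime integers `a, b`, one has `H(a - b) = a^r - b^r`, where
`H(x) = ∑_{k=0}^{(r-1)/2} c_k (ab)^k x^(r-2k)` with `c_k = (r/(r-k))·C(r-k,k)`. -/
theorem H_at_a_sub_b (r : ℕ) (hr : r.Prime) (hodd : Odd r)
    (a b : ℤ) (hab : IsCoprime a b) :
    ∑ k ∈ Finset.range ((r - 1) / 2 + 1),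
        ((r : ℚ) / ((r : ℚ) - (k : ℚ))) * ((r - k).choose k : ℚ) *
          ((a * b : ℤ) : ℚ) ^ k * ((a - b : ℤ) : ℚ) ^ (r - 2 * k) =
      (a : ℚ) ^ r - (b : ℚ) ^ r := by
  obtain ⟨m, hm⟩ := hodd
  have hr1 : 1 ≤ r := hr.pos
  have key := SH_eval (a : ℚ) (-(b : ℚ)) r hr1
  have h1 : (-((a : ℚ) * -(b : ℚ))) = ((a * b : ℤ) : ℚ) := by push_cast; ring
  have h2 : ((a : ℚ) + -(b : ℚ)) = ((a - b : ℤ) : ℚ) := by push_cast; ring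
  rw [h1, h2] at key
  have h3 : (-(b : ℚ)) ^ r = -((b : ℚ)) ^ r := Odd.neg_pow ⟨m, hm⟩ _
  have hrange : (r - 1) / 2 + 1 = r / 2 + 1 := by omega
  have hmain : ∑ k ∈ Finset.range ((r - 1) / 2 + 1),
      ((r : ℚ) / ((r : ℚ) - (k : ℚ))) * ((r - k).choose k : ℚ) *
        ((a * b : ℤ) : ℚ) ^ k * ((a - b : ℤ) : ℚ) ^ (r - 2 * k) =
      SH ((a * b : ℤ) : ℚ) ((a - b : ℤ) : ℚ) r := by
    rw [hrange, SH, SeH]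
    refine Finset.sum_congr rfl fun k _ => ?_
    rw [ccH]
  rw [hmain, key, h3]
  ring
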